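/- The greedy construction—repeatedly forming a coalition of maximum joint utility (ties broken by maximum cardinality) among the remaining agents and removing its members—produces a partition that is both core stable and individually stable for any HGCRP instance. -/

import Mathlib

/-- A partition of the agents of type `α`, given as the map sending each agent to her
coalition: every agent belongs to her own coalition, and the coalitions are consistent. -/
def IsPartitionFn {α : Type*} [DecidableEq α] (C : α → Finset α) : Prop :=
  (∀ i, i ∈ C i) ∧ ∀ i j, i ∈ C j → C i = C j

/-- The social welfare of a partition: the sum of the agents' utilities. -/
noncomputable def welfare {α : Type*} [Fintype α] (U : Finset α → ℝ) (C : α → Finset α) : ℝ :=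
  ∑ i, U (C i)

/-- `C'` Pareto dominates `C`. -/
def ParetoDominates {α : Type*} (U : Finset α → ℝ) (C C' : α → Finset α) : Prop :=
  (∀ i, U (C i) ≤ U (C' i)) ∧ ∃ i, U (C i) < U (C' i)

/-- No partition Pareto dominates `C`. -/
def ParetoOptimal {α : Type*} [DecidableEq α] (U : Finset α → ℝ) (C : α → Finset α) : Prop :=
  ¬ ∃ C', IsPartitionFn C' ∧ ParetoDominates U C C'

/-- No nonempty coalition blocks `C`. -/
def CoreStable {α : Type*} (U : Finset α → ℝ) (C : α → Finset α) : Prop :=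
  ¬ ∃ S : Finset α, S.Nonempty ∧ ∀ i ∈ S, U (C i) < U S

/-- No agent can beneficially move to an existing (possibly empty) coalition without
making the members of that coalition worse off. -/
def IndividuallyStable {α : Type*} [DecidableEq α] (U : Finset α → ℝ) (C : α → Finset α) : Prop :=
  ¬ ∃ i T, i ∉ T ∧ (T = ∅ ∨ ((∃ j, C j = T) ∧ U T ≤ U (insert i T))) ∧
    U (C i) < U (insert i T)

/-- No agent can beneficially move to an existing (possibly empty) coalition. -/
def NashStable {α : Type*} [DecidableEq α] (U : Finset α → ℝ) (C : α → Finset α) : Prop :=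
  ¬ ∃ i T, i ∉ T ∧ (T = ∅ ∨ ∃ j, C j = T) ∧ U (C i) < U (insert i T)

/-- The sequence of the agents' utilities in partition `C`, sorted in non-increasing order. -/
noncomputable def psi {α : Type*} [Fintype α] (U : Finset α → ℝ) (C : α → Finset α) : List ℝ :=
  (Finset.univ.val.map fun i => U (C i)).sort (· ≥ ·)

/-- `GreedyChoice U R Cc`: among the nonempty subsets of the remaining agents `R`,
`Cc` maximizes the joint utility, with ties broken in favor of larger cardinality. -/
def GreedyChoice {α : Type*} [DecidableEq α] (U : Finset α → ℝ) (R Cc : Finset α) : Prop :=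
  Cc.Nonempty ∧ Cc ⊆ R ∧ (∀ S ⊆ R, S.Nonempty → U S ≤ U Cc) ∧
    (∀ S ⊆ R, S.Nonempty → U S = U Cc → S.card ≤ Cc.card)

/-- `GreedyRun U R L`: the list of coalitions `L` is a possible run of the greedy procedure
on the set `R` of remaining agents: repeatedly form a greedy-choice coalition and remove
its members, until no agent remains. -/
inductive GreedyRun {α : Type*} [DecidableEq α] (U : Finset α → ℝ) :
    Finset α → List (Finset α) → Prop
  | nil : GreedyRun U ∅ []
  | cons {R Cc : Finset α} {L : List (Finset α)} :
      GreedyChoice U R Cc → GreedyRun U (R \ Cc) L → GreedyRun U R (Cc :: L)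

lemma run_block_subset {α : Type*} [DecidableEq α] {U : Finset α → ℝ} {R : Finset α}
    {L : List (Finset α)} (h : GreedyRun U R L) : ∀ B ∈ L, B ⊆ R := by
  induction h with
  | nil => simp
  | @cons R Cc L hc hr ih =>
    intro B hB
    rcases List.mem_cons.mp hB with rfl | hB
    · exact hc.2.1
    · exact (ih B hB).trans Finset.sdiff_subset

lemma run_block_unique {α : Type*} [DecidableEq α] {U : Finset α → ℝ} {R : Finset α}
    {L : List (Finset α)} (h : GreedyRun U R L) :
    ∀ B ∈ L, ∀ B' ∈ L, ∀ i, i ∈ B → i ∈ B' → B = B' := by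
  induction h with
  | nil => simp
  | @cons R Cc L hc hr ih =>
    intro B hB B' hB' i hiB hiB'
    rcases List.mem_cons.mp hB with hB1 | hB1
    · rcases List.mem_cons.mp hB' with hB2 | hB2
      · rw [hB1, hB2]
      · have := run_block_subset hr B' hB2 hiB'
        simp only [Finset.mem_sdiff] at this
        exact absurd (hB1 ▸ hiB) this.2
    · rcases List.mem_cons.mp hB' with hB2 | hB2
      · have := run_block_subset hr B hB1 hiB
        simp only [Finset.mem_sdiff] at this
        exact absurd (hB2 ▸ hiB') this.2
      · exact ih B hB1 B' hB2 i hiB hiB'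

lemma run_first_block {α : Type*} [DecidableEq α] {U : Finset α → ℝ} {R : Finset α}
    {L : List (Finset α)} (h : GreedyRun U R L) :
    ∀ S ⊆ R, S.Nonempty →
      ∃ B ∈ L, (S ∩ B).Nonempty ∧ U S ≤ U B ∧ (U S = U B → S.card ≤ B.card) := by
  induction h with
  | nil =>
    intro S hS hne
    rw [Finset.subset_empty.mp hS] at hne
    exact absurd hne (by simp)
  | @cons R Cc L hc hr ih =>
    intro S hS hne
    by_cases hint : (S ∩ Cc).Nonempty
    · exact ⟨Cc, List.mem_cons_self, hint, hc.2.2.1 S hS hne, hc.2.2.2 S hS hne⟩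
    · have hdisj : Disjoint S Cc :=
        Finset.disjoint_iff_inter_eq_empty.mpr (Finset.not_nonempty_iff_eq_empty.mp hint)
      have hsub : S ⊆ R \ Cc := Finset.subset_sdiff.mpr ⟨hS, hdisj⟩
      obtain ⟨B, hB, h1, h2, h3⟩ := ih S hsub hne
      exact ⟨B, List.mem_cons_of_mem _ hB, h1, h2, h3⟩

/-- The greedy construction produces a partition that is both core stable and individually
stable for any HGCRP instance. -/
theorem stmt8 {α : Type*} [Fintype α] [DecidableEq α]
    (U : Finset α → ℝ) (hU : ∀ S : Finset α, 0 ≤ U S)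
    (L : List (Finset α)) (hL : GreedyRun U Finset.univ L)
    (C : α → Finset α) (hC : IsPartitionFn C) (hparts : ∀ i, C i ∈ L) :
    CoreStable U C ∧ IndividuallyStable U C := by
  constructor
  · rintro ⟨S, hSne, hblock⟩
    obtain ⟨B, hB, hint, hle, -⟩ := run_first_block hL S (Finset.subset_univ S) hSne
    obtain ⟨i, hi⟩ := hint
    rw [Finset.mem_inter] at hi
    have hBC : B = C i := run_block_unique hL B hB (C i) (hparts i) i hi.2 (hC.1 i)
    have := hblock i hi.1
    rw [← hBC] at this
    linarith
  · rintro ⟨i, T, hiT, hor, hlt⟩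
    set S := insert i T with hSdef
    have hSne : S.Nonempty := ⟨i, Finset.mem_insert_self i T⟩
    obtain ⟨B, hB, hint, hle, htie⟩ := run_first_block hL S (Finset.subset_univ S) hSne
    obtain ⟨x, hx⟩ := hint
    rw [Finset.mem_inter] at hx
    rcases Finset.mem_insert.mp hx.1 with rfl | hxT
    · have hBC : B = C x := run_block_unique hL B hB (C x) (hparts x) x hx.2 (hC.1 x)
      rw [hBC] at hle
      linarith
    · rcases hor with rfl | ⟨⟨j, hj⟩, hUT⟩
      · exact absurd hxT (Finset.notMem_empty x)
      · have hCx : C x = T := by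
          rw [← hj]; exact hC.2 x j (hj ▸ hxT)
        have hBC : B = T := by
          rw [← hCx]
          exact run_block_unique hL B hB (C x) (hparts x) x hx.2 (hC.1 x)
        rw [hBC] at hle htie
        have hEq : U S = U T := le_antisymm hle hUT
        have hcard := htie hEq
        rw [hSdef, Finset.card_insert_of_notMem hiT] at hcard
        omega
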